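/- Let R be a noetherian commutative ring satisfying (G₀) and (S₂), and let M be a finitely generated torsion R-module such that some regular element r ∈ R is M-regular and char_R(M) = L·R is principal generated by a regular element L. Then for any x ∈ R and m ≥ 1 with r^m·x ∈ char_R(M), one has x ∈ char_R(M); i.e., char_R(M) is saturated with respect to powers of r. -/

import Mathlib

open Module

section Defs
variable (R : Type*) [CommRing R]

/-- The `r`-th exterior bi-dual `⋂^r_R M := (⋀^r_R (M^*))^*`, realized canonically as the
module of alternating `R`-multilinear forms on `r` copies of the dual module `M^*`. -/
abbrev ExtBidual (M : Type*) [AddCommGroup M] [Module R M] (r : ℕ) :=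
  (Module.Dual R M) [⋀^Fin r]→ₗ[R] R

/-- Functoriality of the exterior bi-dual. -/
noncomputable def extBidualMap {M N : Type*} [AddCommGroup M] [Module R M]
    [AddCommGroup N] [Module R N] (r : ℕ) (f : M →ₗ[R] N) :
    ExtBidual R M r →ₗ[R] ExtBidual R N r where
  toFun φ := φ.compLinearMap f.dualMap
  map_add' := by intros; ext; rfl
  map_smul' := by intros; ext; rfl

/-- The canonical identification `⋂^s_R (R^s) = R`, given by evaluation at the
standard dual basis. -/
noncomputable def extEval (s : ℕ) : ExtBidual R (Fin s → R) s →ₗ[R] R where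
  toFun φ := φ (fun i => LinearMap.proj i)
  map_add' := by intros; rfl
  map_smul' := by intros; rfl

/-- The characteristic ideal of `M` computed from a presentation `0 → N → R^s → M → 0`
with kernel `N`: the image of the induced map `⋂^s_R N → ⋂^s_R R^s = R`. -/
noncomputable def charIdealAux (s : ℕ) (N : Submodule R (Fin s → R)) : Ideal R :=
  LinearMap.range ((extEval R s) ∘ₗ (extBidualMap R s N.subtype))

/-- The zeroth Fitting ideal of `M` computed from a presentation `0 → N → R^s → M → 0`
with kernel `N`: the ideal generated by determinants of `s × s` matrices with columns in `N`. -/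
def fittIdealAux (s : ℕ) (N : Submodule R (Fin s → R)) : Ideal R :=
  Ideal.span { x | ∃ v : Fin s → (Fin s → R), (∀ i, v i ∈ N) ∧ x = (Matrix.of v).det }
end Defs

section Defs2
variable (R : Type*) [CommRing R]

/-- `DepthGE A n` : the local ring `A` has depth at least `n`, i.e. there is a regular
sequence of length `n` contained in the maximal ideal. -/
def DepthGE (A : Type*) [CommRing A] [IsLocalRing A] (n : ℕ) : Prop :=
  ∃ rs : List A, rs.length = n ∧ (∀ r ∈ rs, r ∈ IsLocalRing.maximalIdeal A) ∧
    RingTheory.Sequence.IsRegular A rs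

/-- The height of a prime ideal. -/
noncomputable def primeHt (𝔯 : Ideal R) (h : 𝔯.IsPrime) : ℕ∞ :=
  Order.height (⟨𝔯, h⟩ : PrimeSpectrum R)

/-- Condition (G₀): the localization of `R` at every prime of height `0` is Gorenstein
(for a zero-dimensional local ring, Gorenstein means self-injective). -/
def CondG0 : Prop :=
  ∀ (𝔯 : Ideal R) (h : 𝔯.IsPrime), primeHt R 𝔯 h ≤ 0 →
    Module.Injective (Localization.AtPrime 𝔯) (Localization.AtPrime 𝔯)

/-- Serre's condition (Sₙ): `depth R_𝔯 ≥ min {n, ht 𝔯}` for every prime `𝔯`. -/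
def CondS (n : ℕ) : Prop :=
  ∀ (𝔯 : Ideal R) (h : 𝔯.IsPrime) (m : ℕ),
    (m : ℕ∞) ≤ min (n : ℕ∞) (primeHt R 𝔯 h) → DepthGE (Localization.AtPrime 𝔯) m

/-- The canonical map `I** → R** = R` for an ideal `I ⊆ R`. -/
noncomputable def bidualToRing (I : Ideal R) :
    Module.Dual R (Module.Dual R I) →ₗ[R] R where
  toFun φ := φ ((Submodule.subtype I).dualMap (LinearMap.id : R →ₗ[R] R))
  map_add' := by intros; rfl
  map_smul' := by intros; rfl
end Defs2


section AuxSaturation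

open Pointwise RingTheory.Sequence

variable {R' : Type*} [CommRing R']

/-- Membership in the pointwise-scaled top submodule. -/
lemma aux_mem_smul_top_iff {M : Type*} [AddCommGroup M] [Module R' M] (a : R') (x : M) :
    x ∈ a • (⊤ : Submodule R' M) ↔ ∃ y, a • y = x := by
  change x ∈ Submodule.map (DistribMulAction.toLinearMap R' M a) ⊤ ↔ _
  rw [Submodule.mem_map]
  simp
  exact Iff.rfl

/-- Key localization lemma: if every prime between `J` and `q` equals `q`, then for `b ∈ q`
some power of `b` multiplied by an element outside `q` lands in `J`. -/
lemma aux_loc_nilp (q : Ideal R') (hqp : q.IsPrime) (J : Ideal R')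
    (hq : ∀ q' : Ideal R', q'.IsPrime → q' ≤ q → J ≤ q' → q' = q) (b : R') (hb : b ∈ q) :
    ∃ v ∉ q, ∃ k : ℕ, v * b ^ k ∈ J := by
  classical
  haveI := hqp
  set A := Localization.AtPrime q
  have hrad : algebraMap R' A b ∈ (J.map (algebraMap R' A)).radical := by
    rw [Ideal.radical_eq_sInf, Ideal.mem_sInf]
    rintro Q ⟨hJQ, hQp⟩
    have hcp : (Q.comap (algebraMap R' A)).IsPrime := hQp.comap _
    have hle : Q.comap (algebraMap R' A) ≤ q := by
      intro u hu
      by_contra hunq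
      have : IsUnit (algebraMap R' A u) := IsLocalization.map_units A (⟨u, hunq⟩ : q.primeCompl)
      exact hQp.ne_top (Q.eq_top_of_isUnit_mem hu this)
    have hJle : J ≤ Q.comap (algebraMap R' A) :=
      le_trans Ideal.le_comap_map (Ideal.comap_mono hJQ)
    have := hq _ hcp hle hJle
    rw [← this] at hb
    exact hb
  obtain ⟨k, hk⟩ := hrad
  rw [← map_pow] at hk
  rw [IsLocalization.mem_map_algebraMap_iff q.primeCompl A] at hk
  obtain ⟨⟨j, u⟩, hju⟩ := hk
  rw [← map_mul] at hju
  rw [IsLocalization.eq_iff_exists q.primeCompl A] at hju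
  obtain ⟨c, hc⟩ := hju
  refine ⟨(c : R') * (u : R'), fun hmem => ?_, k, ?_⟩
  · rcases hqp.mem_or_mem hmem with h | h
    · exact c.2 h
    · exact u.2 h
  · have : (c : R') * (u : R') * b ^ k = (c : R') * (j : R') := by
      linear_combination hc
    rw [this]
    exact J.mul_mem_left _ j.2

/-- A minimal prime cannot contain a regular element. -/
lemma aux_min_prime_no_regular (q : Ideal R') (hqp : q.IsPrime)
    (hmin : ∀ q' : Ideal R', q'.IsPrime → q' ≤ q → q' = q)
    (a : R') (ha : a ∈ nonZeroDivisors R') (haq : a ∈ q) : False := by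
  obtain ⟨v, hv, k, hvk⟩ := aux_loc_nilp q hqp ⊥ (fun q' h1 h2 _ => hmin q' h1 h2) a haq
  have hak : a ^ k ∈ nonZeroDivisors R' := pow_mem ha k
  have : v = 0 := hak.2 v (by rwa [Ideal.mem_bot] at hvk)
  exact hv (this ▸ q.zero_mem)

/-- If `depth A ≥ 2`, there is no `x ∉ L·A` with `𝔪·x ⊆ L·A` for a regular element `L`. -/
lemma aux_depth_two_exchange {A : Type*} [CommRing A] [IsLocalRing A]
    (L1 : A) (hL1 : L1 ∈ nonZeroDivisors A)
    (xt : A) (hxt : ∀ c : A, xt ≠ L1 * c)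
    (hxm : ∀ t ∈ IsLocalRing.maximalIdeal A, ∃ w, t * xt = L1 * w)
    (hd : DepthGE A 2) : False := by
  obtain ⟨rs, hlen, hmem, hregseq⟩ := hd
  obtain ⟨α, β, rfl⟩ := List.length_eq_two.mp hlen
  have hα : α ∈ IsLocalRing.maximalIdeal A := hmem α (by simp)
  have hβ : β ∈ IsLocalRing.maximalIdeal A := hmem β (by simp)
  have hwr := hregseq.toIsWeaklyRegular
  rw [isWeaklyRegular_cons_iff] at hwr
  obtain ⟨hαreg, hwr2⟩ := hwr
  rw [isWeaklyRegular_cons_iff] at hwr2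
  have hβreg : IsSMulRegular (QuotSMulTop α A) β := hwr2.1
  obtain ⟨x1, hx1⟩ := hxm α hα
  have hx1n : ∀ c : A, x1 ≠ α * c := by
    intro c hc
    apply hxt c
    have h0 : α * xt = α * (L1 * c) := by rw [hx1, hc]; ring
    exact hαreg (by simpa [smul_eq_mul] using h0)
  have hβx1 : ∃ w, β * x1 = α * w := by
    obtain ⟨wβ, hwβ⟩ := hxm β hβ
    have hcalc : L1 * (β * x1) = L1 * (α * wβ) := by
      calc L1 * (β * x1) = β * (L1 * x1) := by ring
        _ = β * (α * xt) := by rw [hx1]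
        _ = α * (β * xt) := by ring
        _ = α * (L1 * wβ) := by rw [hwβ]
        _ = L1 * (α * wβ) := by ring
    exact ⟨wβ, (mul_cancel_left_mem_nonZeroDivisors hL1).mp hcalc⟩
  obtain ⟨w, hw⟩ := hβx1
  have hmemq : β • (Submodule.Quotient.mk x1 : QuotSMulTop α A)
      = β • (Submodule.Quotient.mk 0) := by
    rw [← Submodule.Quotient.mk_smul, ← Submodule.Quotient.mk_smul, Submodule.Quotient.eq]
    rw [aux_mem_smul_top_iff]
    exact ⟨w, by simp [smul_eq_mul, hw]⟩
  have hq := hβreg hmemq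
  rw [Submodule.Quotient.eq, sub_zero, aux_mem_smul_top_iff] at hq
  obtain ⟨y, hy⟩ := hq
  exact hx1n y (by rw [← hy]; simp [smul_eq_mul])

/-- Determinants of matrices with all columns in `N` belong to the characteristic ideal. -/
lemma aux_det_mem_charIdealAux (s : ℕ) (N : Submodule R' (Fin s → R'))
    (v : Fin s → (Fin s → R')) (hv : ∀ j, v j ∈ N) :
    (Matrix.of v).det ∈ charIdealAux R' s N := by
  classical
  set g : Module.Dual R' N →ₗ[R'] (Fin s → R') :=
    LinearMap.pi (fun j => LinearMap.applyₗ (⟨v j, hv j⟩ : N)) with hg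
  refine ⟨(Matrix.detRowAlternating : (Fin s → R') [⋀^Fin s]→ₗ[R'] R').compLinearMap g, ?_⟩
  show Matrix.detRowAlternating (fun i => g ((N.subtype.dualMap) (LinearMap.proj i))) = _
  have h1 : (fun i => g ((N.subtype.dualMap) (LinearMap.proj i)))
      = fun i => (Matrix.of v).transpose i := by
    ext i j
    rfl
  rw [h1]
  show ((Matrix.of v).transpose).det = _
  rw [Matrix.det_transpose]

end AuxSaturation

/-- If a noetherian ring satisfies (G₀) and (S₂), `M` is a finitely generated torsion module,
`r` is a regular element that is `M`-regular, and `char_R(M) = L·R` is principal generated by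
a regular element `L`, then `char_R(M)` is saturated with respect to powers of `r`:
`r^m·x ∈ char_R(M)` implies `x ∈ char_R(M)`. -/
theorem char_saturated (R : Type*) [CommRing R] [IsNoetherianRing R]
    (hG : CondG0 R) (hS : CondS R 2)
    (M : Type*) [AddCommGroup M] [Module R M] [Module.Finite R M]
    (htors : ∃ a ∈ nonZeroDivisors R, ∀ x : M, a • x = 0)
    (r : R) (hr : r ∈ nonZeroDivisors R)
    (hreg : Function.Injective (fun m : M => r • m))
    (s : ℕ) (hs : 0 < s) (π : (Fin s → R) →ₗ[R] M) (hπ : Function.Surjective π)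
    (L : R) (hL : L ∈ nonZeroDivisors R)
    (hchar : charIdealAux R s (LinearMap.ker π) = Ideal.span {L})
    (x : R) (m : ℕ) (hm : 1 ≤ m)
    (hx : r ^ m * x ∈ charIdealAux R s (LinearMap.ker π)) :
    x ∈ charIdealAux R s (LinearMap.ker π) := by
  classical
  obtain ⟨a, ha, hann⟩ := htors
  rw [hchar] at hx ⊢
  -- it suffices to treat the case `m = 1`
  have key : ∀ z : R, r * z ∈ Ideal.span {L} → z ∈ Ideal.span {L} := by
    intro z hz
    by_contra hznot
    -- pass to the quotient `R/(L)` and pick an associated prime containing `r`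
    set Rq := R ⧸ Ideal.span {L} with hRq
    have hzne : (Ideal.Quotient.mk (Ideal.span {L}) z : Rq) ≠ 0 := by
      intro h0
      exact hznot (Ideal.Quotient.eq_zero_iff_mem.mp h0)
    obtain ⟨P, hPassoc, hannle⟩ :=
      exists_le_isAssociatedPrime_of_isNoetherianRing R
        (Ideal.Quotient.mk (Ideal.span {L}) z) hzne
    obtain ⟨hPprime, y, hPy⟩ := isAssociatedPrime_iff.mp hPassoc
    obtain ⟨z', hz'⟩ := Ideal.Quotient.mk_surjective y
    have hsmul : ∀ t w : R, t • (Ideal.Quotient.mk (Ideal.span {L}) w : Rq)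
        = Ideal.Quotient.mk (Ideal.span {L}) (t * w) := by
      intro t w
      rw [Algebra.smul_def]
      rfl
    -- membership in `P` is detected by multiplication with `z'`
    have hPz' : ∀ t : R, t ∈ P ↔ t * z' ∈ Ideal.span {L} := by
      intro t
      rw [hPy, Submodule.mem_colon_singleton, Submodule.mem_bot, ← hz', hsmul,
        Ideal.Quotient.eq_zero_iff_mem]
    have hrP : r ∈ P := by
      apply hannle
      rw [Submodule.mem_colon_singleton, Submodule.mem_bot, hsmul, Ideal.Quotient.eq_zero_iff_mem]
      exact hz
    have hLP : L ∈ P := by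
      rw [hPz']
      exact Ideal.mul_mem_right _ _ (Ideal.mem_span_singleton_self L)
    have hz'notin : z' ∉ Ideal.span {L} := by
      intro hmem
      have h1 : (1 : R) ∈ P := by
        rw [hPz', one_mul]; exact hmem
      exact hPprime.ne_top (Ideal.eq_top_iff_one P |>.mpr h1)
    -- split on the height of `P`
    rcases le_or_gt (primeHt R P hPprime) 1 with hht | hht
    · -- height at most one : use the module `M`
      -- any prime between `Ann M` and `P` is `P`
      have hmin2 : ∀ q' : Ideal R, q'.IsPrime → q' ≤ P → Module.annihilator R M ≤ q' →
          q' = P := by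
        intro q' hq'p hle hJle
        by_contra hne
        have hlt : (⟨q', hq'p⟩ : PrimeSpectrum R) < ⟨P, hPprime⟩ :=
          lt_of_le_of_ne hle (by simpa [PrimeSpectrum.ext_iff] using hne)
        have hy0 : Order.height (⟨q', hq'p⟩ : PrimeSpectrum R) = 0 := by
          have := (Order.height_le_coe_iff (n := 1)).mp (by
            simpa [primeHt] using hht) _ hlt
          exact ENat.lt_one_iff_eq_zero.mp (by simpa using this)
        have hymin : IsMin (⟨q', hq'p⟩ : PrimeSpectrum R) := Order.height_eq_zero.mp hy0
        have hq'min : ∀ q'' : Ideal R, q''.IsPrime → q'' ≤ q' → q'' = q' := by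
          intro q'' hq''p hle''
          have h2 : (⟨q', hq'p⟩ : PrimeSpectrum R) ≤ ⟨q'', hq''p⟩ :=
            hymin (show (⟨q'', hq''p⟩ : PrimeSpectrum R) ≤ ⟨q', hq'p⟩ from hle'')
          exact le_antisymm hle'' h2
        have haq' : a ∈ q' := hJle (Module.mem_annihilator.mpr hann)
        exact aux_min_prime_no_regular q' hq'p hq'min a ha haq'
      obtain ⟨v, hvP, k, hvk⟩ :=
        aux_loc_nilp P hPprime (Module.annihilator R M) hmin2 r hrP
      -- `r^k` acts injectively on `M`
      have hregk : Function.Injective (fun mm : M => r ^ k • mm) := by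
        clear hvk
        induction k with
        | zero => intro a b h; simpa using h
        | succ n ih =>
          intro m1 m2 h12
          simp only [pow_succ, mul_smul] at h12
          exact hreg (ih h12)
      -- so `v` annihilates `M`
      have hvann : ∀ mm : M, v • mm = 0 := by
        intro mm
        have h0 : (v * r ^ k) • mm = 0 := Module.mem_annihilator.mp hvk mm
        have h1 : r ^ k • (v • mm) = r ^ k • (0 : M) := by
          rw [smul_zero, ← mul_smul, mul_comm]
          exact h0
        exact hregk h1
      -- the determinant trick : `v ^ s ∈ char ⊆ P`
      set vc : Fin s → (Fin s → R) := fun j => v • (Pi.single j (1 : R) : Fin s → R) with hvc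
      have hcols : ∀ j : Fin s, vc j ∈ LinearMap.ker π := by
        intro j
        rw [hvc, LinearMap.mem_ker, map_smul]
        exact hvann _
      have hdet : (Matrix.of vc).det ∈ charIdealAux R s (LinearMap.ker π) :=
        aux_det_mem_charIdealAux s (LinearMap.ker π) _ hcols
      have hmat : (Matrix.of vc) = v • (1 : Matrix (Fin s) (Fin s) R) := by
        ext i j
        by_cases h : i = j <;>
          simp [hvc, Pi.single_apply, Matrix.one_apply, h, eq_comm]
      rw [hmat, Matrix.det_smul, Matrix.det_one, mul_one, Fintype.card_fin, hchar] at hdet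
      have hspanP : Ideal.span {L} ≤ P := by
        rw [Ideal.span_le, Set.singleton_subset_iff]
        exact hLP
      exact hvP (hPprime.mem_of_pow_mem s (hspanP hdet))
    · -- height at least two : use depth
      haveI := hPprime
      have hd2 : DepthGE (Localization.AtPrime P) 2 := by
        apply hS P hPprime 2
        refine le_min le_rfl ?_
        have h2 : (1 : ℕ∞) + 1 ≤ primeHt R P hPprime := Order.add_one_le_of_lt hht
        simpa [one_add_one_eq_two] using h2
      set A := Localization.AtPrime P with hA
      set φA := algebraMap R A with hφA
      have hL1 : φA L ∈ nonZeroDivisors A :=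
        IsLocalization.nonZeroDivisors_le_comap P.primeCompl A hL
      have hxt : ∀ c : A, φA z' ≠ φA L * c := by
        intro c hc
        obtain ⟨c0, sden, hc0⟩ : ∃ (c0 : R) (sden : P.primeCompl), IsLocalization.mk' A c0 sden = c := by
          obtain ⟨⟨c1, s1⟩, h1⟩ := IsLocalization.mk'_surjective P.primeCompl c
          exact ⟨c1, s1, h1⟩
        rw [← hc0, ← IsLocalization.mk'_one (M := P.primeCompl) A z',
          IsLocalization.mul_mk'_eq_mk'_of_mul] at hc
        rw [IsLocalization.mk'_eq_iff_eq (M := P.primeCompl)] at hc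
        rw [IsLocalization.eq_iff_exists P.primeCompl A] at hc
        obtain ⟨u, hu⟩ := hc
        have hts : ((u : R) * (sden : R)) ∈ P := by
          rw [hPz']
          refine Ideal.mem_span_singleton'.mpr ⟨(u : R) * c0, ?_⟩
          simp only [OneMemClass.coe_one, one_mul, mul_one] at hu
          linear_combination -hu
        rcases hPprime.mem_or_mem hts with h | h
        · exact u.2 h
        · exact sden.2 h
      have hxm : ∀ t ∈ IsLocalRing.maximalIdeal A, ∃ w, t * φA z' = φA L * w := by
        intro t ht
        rw [← Localization.AtPrime.map_eq_maximalIdeal] at ht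
        rw [IsLocalization.mem_map_algebraMap_iff P.primeCompl A] at ht
        obtain ⟨⟨p, u⟩, hpu⟩ := ht
        have hpz : (p : R) * z' ∈ Ideal.span {L} := (hPz' p).mp p.2
        obtain ⟨a0, ha0⟩ := Ideal.mem_span_singleton'.mp hpz
        have hunit : IsUnit (φA (u : R)) := IsLocalization.map_units A u
        obtain ⟨e, he⟩ := hunit
        have h1 : (t * φA z') * (e : A) = φA L * φA a0 := by
          rw [he]
          calc t * φA z' * φA (u : R) = (t * φA (u : R)) * φA z' := by ring
            _ = φA (p : R) * φA z' := by rw [hpu]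
            _ = φA ((p : R) * z') := by rw [map_mul]
            _ = φA (a0 * L) := by rw [ha0]
            _ = φA L * φA a0 := by rw [map_mul]; ring
        refine ⟨φA a0 * (↑e⁻¹ : A), ?_⟩
        calc t * φA z' = (t * φA z') * ((e : A) * (↑e⁻¹ : A)) := by
              rw [Units.mul_inv]; ring
          _ = ((t * φA z') * (e : A)) * (↑e⁻¹ : A) := by ring
          _ = (φA L * φA a0) * (↑e⁻¹ : A) := by rw [h1]
          _ = φA L * (φA a0 * (↑e⁻¹ : A)) := by ring
      exact aux_depth_two_exchange (φA L) hL1 (φA z') hxt hxm hd2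
  -- now iterate `key`
  clear hm
  induction m with
  | zero => simpa using hx
  | succ n ih =>
    apply ih
    apply key
    rw [← mul_assoc, ← pow_succ']
    exact hx
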